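/- arXiv:1312.3294 — 2 statements merged into one kernel-verified Lean document; each statement's English description precedes it below -/
import Mathlib

section
/- For an affinely independent family v₀,…,vₙ in ℝⁿ and a subset S of the index set, the affine span of {vᵢ : i ∈ S} equals the intersection over j ∉ S of the affine hyperplanes H_j := aff{vᵢ : i ≠ j}. -/
open Finset in
private lemma exists_weights_of_mem_affineSpan_image {n : ℕ}
    {v : Fin (n + 1) → EuclideanSpace ℝ (Fin n)} {s : Set (Fin (n + 1))}
    {x : EuclideanSpace ℝ (Fin n)} (hx : x ∈ affineSpan ℝ (v '' s)) :
    ∃ w : Fin (n + 1) → ℝ, ∑ i, w i = 1 ∧ (∀ i, i ∉ s → w i = 0) ∧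
      x = Finset.univ.affineCombination ℝ v w := by
  classical
  rw [Set.image_eq_range] at hx
  obtain ⟨u, hu, hux⟩ := eq_affineCombination_of_mem_affineSpan_of_fintype hx
  set e : s ↪ Fin (n + 1) := Function.Embedding.subtype _ with he
  set t : Finset (Fin (n + 1)) := Finset.univ.map e with ht
  have hmem : ∀ i, i ∈ t ↔ i ∈ s := by
    intro i
    simp [ht, he, Finset.mem_map, Function.Embedding.coe_subtype]
  refine ⟨fun i => if h : i ∈ s then u ⟨i, h⟩ else 0, ?_, ?_, ?_⟩
  · rw [← Finset.sum_subset (Finset.subset_univ t)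
      (by intro i _ hi; simp [dif_neg (fun h => hi ((hmem i).2 h))])]
    rw [ht, Finset.sum_map]
    simp only [he, Function.Embedding.coe_subtype]
    rw [← hu]
    exact Finset.sum_congr rfl fun i _ => by simp [dif_pos i.2]
  · intro i hi; simp [dif_neg hi]
  · have hcomb : t.affineCombination ℝ v (fun i => if h : i ∈ s then u ⟨i, h⟩ else 0)
        = Finset.univ.affineCombination ℝ (fun i : s => v i) u := by
      rw [ht, Finset.affineCombination_map]
      congr 1
      funext i
      simp [he, Function.Embedding.coe_subtype, dif_pos i.2]
    have hind : t.affineCombination ℝ v (fun i => if h : i ∈ s then u ⟨i, h⟩ else 0)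
        = Finset.univ.affineCombination ℝ v
            ((↑t : Set (Fin (n + 1))).indicator
              (fun i => if h : i ∈ s then u ⟨i, h⟩ else 0)) :=
      Finset.affineCombination_indicator_subset _ _ (Finset.subset_univ t)
    have hindw : (↑t : Set (Fin (n + 1))).indicator
        (fun i => if h : i ∈ s then u ⟨i, h⟩ else 0)
        = fun i => if h : i ∈ s then u ⟨i, h⟩ else 0 := by
      funext i
      by_cases h : i ∈ s
      · rw [Set.indicator_of_mem (by simpa [Finset.mem_coe] using (hmem i).2 h)]
      · simp [Set.indicator_apply, dif_neg h]
    rw [hux, ← hcomb, hind, hindw]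

open Finset in
private lemma affineCombination_mem_affineSpan_image' {n : ℕ}
    {v : Fin (n + 1) → EuclideanSpace ℝ (Fin n)} {s : Set (Fin (n + 1))}
    {w : Fin (n + 1) → ℝ} (hw : ∑ i, w i = 1) (hws : ∀ i, i ∉ s → w i = 0) :
    Finset.univ.affineCombination ℝ v w ∈ affineSpan ℝ (v '' s) := by
  classical
  rw [Set.image_eq_range]
  set e : s ↪ Fin (n + 1) := Function.Embedding.subtype _ with he
  set t : Finset (Fin (n + 1)) := Finset.univ.map e with ht
  have hmem : ∀ i, i ∈ t ↔ i ∈ s := by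
    intro i
    simp [ht, he, Finset.mem_map, Function.Embedding.coe_subtype]
  have hsum : ∑ i : s, w i = 1 := by
    rw [← hw]
    rw [← Finset.sum_subset (Finset.subset_univ t)
      (by intro i _ hi; exact hws i fun h => hi ((hmem i).2 h))]
    rw [ht, Finset.sum_map]
    rfl
  have hcomb : Finset.univ.affineCombination ℝ (fun i : s => v i) (fun i : s => w i)
      = Finset.univ.affineCombination ℝ v w := by
    have h1 : t.affineCombination ℝ v w
        = Finset.univ.affineCombination ℝ (fun i : s => v i) (fun i : s => w i) := by
      rw [ht, Finset.affineCombination_map]; rfl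
    have h2 : t.affineCombination ℝ v w
        = Finset.univ.affineCombination ℝ v ((↑t : Set (Fin (n + 1))).indicator w) :=
      Finset.affineCombination_indicator_subset _ _ (Finset.subset_univ t)
    have h3 : (↑t : Set (Fin (n + 1))).indicator w = w := by
      funext i
      by_cases h : i ∈ s
      · rw [Set.indicator_of_mem (by simpa [Finset.mem_coe] using (hmem i).2 h)]
      · simp [Set.indicator_apply, hws i h]
    rw [← h1, h2, h3]
  rw [← hcomb]
  exact affineCombination_mem_affineSpan hsum _

/-- For affinely independent points `v₀, …, vₙ` in `ℝⁿ` and a subset `S` of the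
index set, the affine span of `{vᵢ : i ∈ S}` equals the intersection over
`j ∉ S` of the hyperplanes `H_j = aff {vᵢ : i ≠ j}`. -/
theorem affineSpan_eq_iInf_hyperplanes {n : ℕ}
    (v : Fin (n + 1) → EuclideanSpace ℝ (Fin n))
    (hv : AffineIndependent ℝ v) (S : Set (Fin (n + 1))) :
    affineSpan ℝ (v '' S) =
      ⨅ j ∈ Sᶜ, affineSpan ℝ (v '' {i | i ≠ j}) := by
  classical
  apply le_antisymm
  · refine le_iInf fun j => le_iInf fun hj => affineSpan_mono _ ?_
    exact Set.image_mono fun i hi (h : i = j) => hj (h ▸ hi)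
  · intro x hx
    have hx : ∀ j ∉ S, x ∈ affineSpan ℝ (v '' {i | i ≠ j}) :=
      fun j hj => SetLike.le_def.mp
        (iInf₂_le (f := fun j (_ : j ∈ Sᶜ) => affineSpan ℝ (v '' {i | i ≠ j})) j hj) hx
    by_cases hS : Sᶜ = ∅
    · -- S = univ; LHS is ⊤
      have hSu : S = Set.univ := by
        rw [← Set.compl_empty, ← hS, compl_compl]
      rw [hSu, Set.image_univ]
      have htop : affineSpan ℝ (Set.range v) = ⊤ := by
        rw [hv.affineSpan_eq_top_iff_card_eq_finrank_add_one]
        simp [finrank_euclideanSpace_fin]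
      rw [htop]
      trivial
    · obtain ⟨j₀, hj₀⟩ := Set.nonempty_iff_ne_empty.2 hS
      obtain ⟨w, hw, hws, hwx⟩ := exists_weights_of_mem_affineSpan_image (hx j₀ hj₀)
      have hzero : ∀ j, j ∉ S → w j = 0 := by
        intro j hj
        obtain ⟨w', hw', hws', hwx'⟩ := exists_weights_of_mem_affineSpan_image (hx j hj)
        have := (affineIndependent_iff_eq_of_fintype_affineCombination_eq ℝ v).1 hv
          w w' hw hw' (hwx ▸ hwx'.symm ▸ rfl)
        rw [this]
        exact hws' j (by simp)
      rw [hwx]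
      exact affineCombination_mem_affineSpan_image' hw hzero
end

section
/- Let S = ℝ[x, y, z] and for k = 0,…,n−1 define uₖ = (k+1)x − y − (k+1)k/2 · z and lₖ = (k+1)x + y − (k+1)k/2 · z. Let p_y : S → ℝ[x, z] be the evaluation y ↦ 0. Then p_y maps the ideal J_r = ⋂_{k=0}^{n−1} (uₖ^{r+1}, lₖ^{r+1}) into the principal ideal I_r = ((∏_{k=0}^{n−1}((k+1)x − (k+1)k/2 · z))^{r+1}) of ℝ[x, z]. -/
open MvPolynomial

/-- `S = ℝ[x, y, z]` with `x = X 0`, `y = X 1`, `z = X 2`. -/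
abbrev S3 := MvPolynomial (Fin 3) ℝ

/-- `R = ℝ[x, z]` with `x = X 0`, `z = X 1`. -/
abbrev R2 := MvPolynomial (Fin 2) ℝ

/-- The evaluation `p_y : ℝ[x,y,z] → ℝ[x,z]`, `y ↦ 0` (fixing `x` and `z`). -/
noncomputable def pY : S3 →ₐ[ℝ] R2 :=
  aeval ![X 0, 0, X 1]

/-- The linear form `uₖ = (k+1)x - y - (k+1)k/2 · z` in `ℝ[x,y,z]`. -/
noncomputable def uForm (k : ℕ) : S3 :=
  C ((k : ℝ) + 1) * X 0 - X 1 - C (((k : ℝ) + 1) * k / 2) * X 2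

/-- The linear form `lₖ = (k+1)x + y - (k+1)k/2 · z` in `ℝ[x,y,z]`. -/
noncomputable def lForm (k : ℕ) : S3 :=
  C ((k : ℝ) + 1) * X 0 + X 1 - C (((k : ℝ) + 1) * k / 2) * X 2

/-- `X 0 - C a * X 1` is prime in `ℝ[x,z]`. -/
lemma prime_lin (a : ℝ) : Prime (X 0 - C a * X 1 : R2) := by
  rw [← MulEquiv.prime_iff (finSuccEquiv ℝ 1).toMulEquiv]
  have : (finSuccEquiv ℝ 1).toMulEquiv (X 0 - C a * X 1 : R2)
      = Polynomial.X - Polynomial.C (C a * X 0) := by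
    show (finSuccEquiv ℝ 1) (X 0 - C a * X 1 : R2) = _
    rw [map_sub, map_mul, finSuccEquiv_X_zero]
    rw [show (1 : Fin 2) = Fin.succ 0 from rfl, finSuccEquiv_X_succ]
    simp [MvPolynomial.finSuccEquiv_apply, Polynomial.C_mul]
  rw [this]
  exact Polynomial.prime_X_sub_C _

lemma lin_not_dvd {a b : ℝ} (h : a ≠ b) :
    ¬ (X 0 - C a * X 1 : R2) ∣ (X 0 - C b * X 1) := by
  intro ⟨c, hc⟩
  have := congrArg (eval ![a, 1]) hc
  simp at this
  exact h (by linarith [this])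

lemma prod_pow_dvd {ι : Type*} [DecidableEq ι] (s : Finset ι) (p : ι → R2) (m : ℕ) (g : R2)
    (hp : ∀ i ∈ s, Prime (p i))
    (hnd : ∀ i ∈ s, ∀ j ∈ s, i ≠ j → ¬ p i ∣ p j)
    (hd : ∀ i ∈ s, p i ^ m ∣ g) : (∏ i ∈ s, p i ^ m) ∣ g := by
  induction s using Finset.induction_on with
  | empty => simp
  | insert a s ha ih =>
    obtain ⟨c, hc⟩ := ih (fun i hi => hp i (Finset.mem_insert_of_mem hi))
      (fun i hi j hj hij => hnd i (Finset.mem_insert_of_mem hi) j (Finset.mem_insert_of_mem hj) hij)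
      (fun i hi => hd i (Finset.mem_insert_of_mem hi))
    have hpa : Prime (p a) := hp a (Finset.mem_insert_self a s)
    have hnotdvd : ¬ p a ∣ ∏ i ∈ s, p i ^ m := by
      intro hdvd
      obtain ⟨i, hi, hdi⟩ := hpa.exists_mem_finset_dvd hdvd
      exact hnd a (Finset.mem_insert_self a s) i (Finset.mem_insert_of_mem hi)
        (fun h => ha (h ▸ hi)) (hpa.dvd_of_dvd_pow hdi)
    have h1 : p a ^ m ∣ (∏ i ∈ s, p i ^ m) * c := hc ▸ hd a (Finset.mem_insert_self a s)
    have h2 : p a ^ m ∣ c := hpa.pow_dvd_of_dvd_mul_left m hnotdvd h1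
    rw [Finset.prod_insert ha, hc, mul_comm]
    exact mul_dvd_mul_left _ h2

/-- `p_y` maps the ideal `J_r = ⋂ₖ (uₖ^(r+1), lₖ^(r+1))` of `ℝ[x,y,z]` into the
principal ideal `I_r = ((∏ₖ ((k+1)x - (k+1)k/2 · z))^(r+1))` of `ℝ[x,z]`. -/
theorem pY_maps_Jr_into_Ir (n r : ℕ) (f : S3)
    (hf : f ∈ ⨅ k : Fin n, Ideal.span {uForm k ^ (r + 1), lForm k ^ (r + 1)}) :
    pY f ∈ Ideal.span
      {(∏ k : Fin n, (C ((k : ℝ) + 1) * X 0 - C (((k : ℝ) + 1) * k / 2) * X 1 : R2)) ^ (r + 1)} := by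
  set m := r + 1 with hm
  set q : Fin n → R2 := fun k => C ((k : ℝ) + 1) * X 0 - C (((k : ℝ) + 1) * k / 2) * X 1 with hq
  set p : Fin n → R2 := fun k => X 0 - C ((k : ℝ) / 2) * X 1 with hpdef
  have hpuY : ∀ k : Fin n, pY (uForm k) = q k := by
    intro k
    simp [pY, uForm, hq, map_sub, map_mul, aeval_X, algebraMap_eq]
  have hplY : ∀ k : Fin n, pY (lForm k) = q k := by
    intro k
    simp [pY, lForm, hq, map_sub, map_add, map_mul, aeval_X, algebraMap_eq]
  have hqp : ∀ k : Fin n, q k = C ((k : ℝ) + 1) * p k := by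
    intro k
    have h : ((k : ℝ) + 1) * k / 2 = ((k : ℝ) + 1) * ((k : ℝ) / 2) := by ring
    rw [hq, hpdef]
    dsimp only
    rw [h, C_mul]
    ring
  -- each q k ^ m divides pY f
  have hqdvd : ∀ k : Fin n, q k ^ m ∣ pY f := by
    intro k
    simp only [Ideal.mem_iInf] at hf
    have hk : f ∈ Ideal.span {uForm k ^ m, lForm k ^ m} := hf k
    rw [Ideal.mem_span_pair] at hk
    obtain ⟨a, b, hab⟩ := hk
    refine ⟨pY a + pY b, ?_⟩
    rw [← hab]
    rw [map_add, map_mul, map_mul, map_pow, map_pow, hpuY, hplY]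
    ring
  have hpd : ∀ k : Fin n, p k ^ m ∣ pY f := by
    intro k
    refine dvd_trans (pow_dvd_pow_of_dvd ⟨C ((k : ℝ) + 1), ?_⟩ m) (hqdvd k)
    rw [hqp k]; ring
  have hprod : (∏ k : Fin n, p k ^ m) ∣ pY f := by
    refine prod_pow_dvd Finset.univ p m (pY f) (fun k _ => prime_lin _) ?_ (fun k _ => hpd k)
    intro i _ j _ hij
    refine lin_not_dvd ?_
    intro h
    apply hij
    have : (i : ℕ) = (j : ℕ) := Nat.cast_injective (by linarith [h] : ((i : ℕ) : ℝ) = (j : ℕ))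
    exact Fin.ext this
  rw [Ideal.mem_span_singleton]
  have hunit : IsUnit (∏ k : Fin n, (C ((k : ℝ) + 1) : R2)) := by
    refine Finset.prod_induction _ IsUnit (fun a b ha hb => ha.mul hb) isUnit_one fun k _ => ?_
    exact IsUnit.map (C : ℝ →+* R2) (by positivity : ((k : ℝ) + 1) ≠ 0).isUnit
  have hprodq : (∏ k : Fin n, q k) = (∏ k : Fin n, (C ((k : ℝ) + 1) : R2)) * ∏ k : Fin n, p k := by
    rw [← Finset.prod_mul_distrib]
    exact Finset.prod_congr rfl fun k _ => hqp k
  calc (∏ k : Fin n, q k) ^ m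
      = (∏ k : Fin n, (C ((k : ℝ) + 1) : R2)) ^ m * ∏ k : Fin n, p k ^ m := by
        rw [hprodq, mul_pow, Finset.prod_pow]
    _ ∣ pY f := (hunit.pow m).mul_left_dvd.mpr hprod
end
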